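/- Let λ, μ ∈ 𝒫^l_n, let 0 ≤ j ≤ n and let t, u ∈ Std(μ) with u ⊴ t (that is, w_u ≤ w_t in the Bruhat order). If t is weakly λ-column-dominated on 1,…,j, then so is u. -/

import Mathlib

namespace FS

open scoped Classical

/-- A node `(r, c, m)`: row `r`, column `c`, component `m` (all 1-based). -/
abbrev Node := ℕ × ℕ × ℕ

/-- Membership of a node in the Young diagram of the multipartition `p`,
where `p m r` is the `r`-th part of the `m`-th component. -/
def InDiag (p : ℕ → ℕ → ℕ) (A : Node) : Prop :=
  1 ≤ A.2.1 ∧ A.2.1 ≤ p A.2.2 A.1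

/-- `p` is an `l`-multipartition of `n` (components indexed `1,…,l`, rows indexed `1,…`). -/
def IsMP (l n : ℕ) (p : ℕ → ℕ → ℕ) : Prop :=
  (∀ m r, (m = 0 ∨ l < m ∨ r = 0 ∨ n < r) → p m r = 0) ∧
  (∀ m r, 1 ≤ r → p m (r + 1) ≤ p m r) ∧
  (∑ m ∈ Finset.Icc 1 l, ∑ r ∈ Finset.Icc 1 n, p m r) = n

/-- Total size of an `l`-multicomposition (rows bounded by `n`). -/
def mpSize (l n : ℕ) (p : ℕ → ℕ → ℕ) : ℕ :=
  ∑ m ∈ Finset.Icc 1 l, ∑ r ∈ Finset.Icc 1 n, p m r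

/-- Size of the `m`-th component. -/
def compSize (n : ℕ) (p : ℕ → ℕ → ℕ) (m : ℕ) : ℕ :=
  ∑ r ∈ Finset.Icc 1 n, p m r

/-- Length of column `c` of component `m`, i.e. `(p^(m))'_c`. -/
def colLen (n : ℕ) (p : ℕ → ℕ → ℕ) (m c : ℕ) : ℕ :=
  ((Finset.Icc 1 n).filter fun r => c ≤ p m r).card

/-- Dominance order on `l`-multicompositions: `Dom l N p q` means `p ⊵ q`. -/
def Dom (l N : ℕ) (p q : ℕ → ℕ → ℕ) : Prop :=
  ∀ m r, 1 ≤ m → m ≤ l →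
    (∑ m' ∈ Finset.Icc 1 (m - 1), compSize N q m') + ∑ r' ∈ Finset.Icc 1 r, q m r' ≤
      (∑ m' ∈ Finset.Icc 1 (m - 1), compSize N p m') + ∑ r' ∈ Finset.Icc 1 r, p m r'

/-- `t` is a `p`-tableau: a bijection from the diagram of `p` onto `{1,…,n}`. -/
def IsTab (n : ℕ) (p : ℕ → ℕ → ℕ) (t : Node → ℕ) : Prop :=
  (∀ A, InDiag p A → 1 ≤ t A ∧ t A ≤ n) ∧
  (∀ A B, InDiag p A → InDiag p B → t A = t B → A = B) ∧
  (∀ i, 1 ≤ i → i ≤ n → ∃ A, InDiag p A ∧ t A = i)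

/-- Entries increase from left to right along each row. -/
def RowStrict (p : ℕ → ℕ → ℕ) (t : Node → ℕ) : Prop :=
  ∀ r c m, InDiag p (r, c, m) → InDiag p (r, c + 1, m) → t (r, c, m) < t (r, c + 1, m)

/-- Entries increase down each column. -/
def ColStrict (p : ℕ → ℕ → ℕ) (t : Node → ℕ) : Prop :=
  ∀ r c m, InDiag p (r, c, m) → InDiag p (r + 1, c, m) → t (r, c, m) < t (r + 1, c, m)

/-- A standard tableau is both row-strict and column-strict. -/
def IsStd (p : ℕ → ℕ → ℕ) (t : Node → ℕ) : Prop := RowStrict p t ∧ ColStrict p t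

/-- The tableau `t_λ`, obtained by writing `1,…,n` in order down successive columns
from left to right (components from `l` down to `1`). -/
def colTab (l n : ℕ) (p : ℕ → ℕ → ℕ) : Node → ℕ := fun A =>
  (∑ m' ∈ Finset.Icc (A.2.2 + 1) l, compSize n p m') +
    (∑ c' ∈ Finset.Icc 1 (A.2.1 - 1), colLen n p A.2.2 c') + A.1

/-- The tableau `t^λ`, obtained by writing `1,…,n` in order along successive rows
from top to bottom (components from `1` up to `l`). -/
def rowTab (n : ℕ) (p : ℕ → ℕ → ℕ) : Node → ℕ := fun A =>
  (∑ m' ∈ Finset.Icc 1 (A.2.2 - 1), compSize n p m') +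
    (∑ r' ∈ Finset.Icc 1 (A.1 - 1), p A.2.2 r') + A.2.1

/-- The Coxeter generator `s_i = (i, i+1)` of the symmetric group. -/
def sw (i : ℕ) : Equiv.Perm ℕ := Equiv.swap i (i + 1)

/-- The product `s_{i_1} ⋯ s_{i_k}` corresponding to a word `L = [i_1,…,i_k]`. -/
def wordProd (L : List ℕ) : Equiv.Perm ℕ := (L.map sw).prod

/-- `L` is an expression for `w` in the Coxeter generators `s_1,…,s_{n-1}` of `S_n`. -/
def IsWord (n : ℕ) (L : List ℕ) (w : Equiv.Perm ℕ) : Prop :=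
  (∀ i ∈ L, 1 ≤ i ∧ i + 1 ≤ n) ∧ wordProd L = w

/-- The Coxeter length of `w ∈ S_n`. -/
noncomputable def len (n : ℕ) (w : Equiv.Perm ℕ) : ℕ :=
  sInf {k | ∃ L, IsWord n L w ∧ L.length = k}

/-- `L` is a reduced expression for `w ∈ S_n`. -/
def IsReduced (n : ℕ) (L : List ℕ) (w : Equiv.Perm ℕ) : Prop :=
  IsWord n L w ∧ L.length = len n w

/-- The Bruhat order on `S_n`: `x ≤ w` iff some reduced expression for `w` has an
expression for `x` as a subsequence. -/
def BruhatLE (n : ℕ) (x w : Equiv.Perm ℕ) : Prop :=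
  ∃ L, IsReduced n L w ∧ ∃ L', L'.Sublist L ∧ wordProd L' = x

/-- Strict Bruhat order. -/
def BruhatLT (n : ℕ) (x w : Equiv.Perm ℕ) : Prop := BruhatLE n x w ∧ x ≠ w

/-- The left (weak) order on `S_n`: `x ≤_L w` iff `ℓ(w) = ℓ(w x⁻¹) + ℓ(x)`. -/
def LeftLE (n : ℕ) (x w : Equiv.Perm ℕ) : Prop :=
  len n w = len n (w * x⁻¹) + len n x

/-- `w` is a permutation of `{1,…,n}` (fixing everything else). -/
def PermOf (n : ℕ) (w : Equiv.Perm ℕ) : Prop := ∀ i, i = 0 ∨ n < i → w i = i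

/-- `w` is the permutation sending the base tableau `base` to the tableau `t`
(e.g. `w = w_t` when `base = t_λ`). -/
def IsPermOfTab (n : ℕ) (p : ℕ → ℕ → ℕ) (base t : Node → ℕ) (w : Equiv.Perm ℕ) : Prop :=
  PermOf n w ∧ ∀ A, InDiag p A → w (base A) = t A

/-- `Shape(t↓j)`: the multicomposition whose `(m, r)` entry is the number of nodes in
row `r` of component `m` whose entry under `t` is at most `j`. -/
def shape (n : ℕ) (p : ℕ → ℕ → ℕ) (t : Node → ℕ) (j : ℕ) : ℕ → ℕ → ℕ :=
  fun m r => ((Finset.Icc 1 n).filter fun c => c ≤ p m r ∧ t (r, c, m) ≤ j).card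

/-- `Shape(t↓j)'`: the conjugate multicomposition, whose `(m, c)` entry is the number of
nodes in column `c` of component `l + 1 - m` whose entry under `t` is at most `j`. -/
def shapeConj (l n : ℕ) (p : ℕ → ℕ → ℕ) (t : Node → ℕ) (j : ℕ) : ℕ → ℕ → ℕ :=
  fun m c => ((Finset.Icc 1 n).filter fun r => c ≤ p (l + 1 - m) r ∧ t (r, c, l + 1 - m) ≤ j).card

/-- `A` lies weakly to the left of `B`. -/
def WeaklyLeft (A B : Node) : Prop :=
  B.2.2 < A.2.2 ∨ (A.2.2 = B.2.2 ∧ A.2.1 ≤ B.2.1)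

/-- `A` lies weakly above `B`. -/
def WeaklyAbove (A B : Node) : Prop :=
  A.2.2 < B.2.2 ∨ (A.2.2 = B.2.2 ∧ A.1 ≤ B.1)

/-- `A` lies weakly to the right of `B`. -/
def WeaklyRight (A B : Node) : Prop :=
  A.2.2 < B.2.2 ∨ (A.2.2 = B.2.2 ∧ B.2.1 ≤ A.2.1)

/-- `t` (a `mu`-tableau) is `lam`-column-dominated on `1,…,j`: each `i ≤ j` appears in `t`
at least as far to the left as it does in `t_lam`. -/
def ColDomOn (l n : ℕ) (lam mu : ℕ → ℕ → ℕ) (t : Node → ℕ) (j : ℕ) : Prop :=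
  ∀ i A B, 1 ≤ i → i ≤ j → InDiag mu A → t A = i → InDiag lam B →
    colTab l n lam B = i → WeaklyLeft A B

/-- `t` is weakly `lam`-column-dominated on `1,…,j`: each `i ≤ j` appears in `t` in a
component at least as far to the left as it does in `t_lam`. -/
def WColDomOn (l n : ℕ) (lam mu : ℕ → ℕ → ℕ) (t : Node → ℕ) (j : ℕ) : Prop :=
  ∀ i A B, 1 ≤ i → i ≤ j → InDiag mu A → t A = i → InDiag lam B →
    colTab l n lam B = i → B.2.2 ≤ A.2.2

/-- `t` (a `mu`-tableau) is `lam`-row-dominated on `1,…,j`: each `i ≤ j` appears in `t`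
at least as high as it does in `t^lam`. -/
def RowDomOn (n : ℕ) (lam mu : ℕ → ℕ → ℕ) (t : Node → ℕ) (j : ℕ) : Prop :=
  ∀ i A B, 1 ≤ i → i ≤ j → InDiag mu A → t A = i → InDiag lam B →
    rowTab n lam B = i → WeaklyAbove A B

/-- The multipartition `λ_L(c, m)`: the first `c` columns of component `m`, followed by
components `m+1,…,l`. -/
def leftPart (lam : ℕ → ℕ → ℕ) (c m : ℕ) : ℕ → ℕ → ℕ := fun k r =>
  if k = 0 then 0 else if k = 1 then min (lam m r) c else lam (m + k - 1) r

/-- The multipartition `λ_R(c, m)`: components `1,…,m-1`, followed by the part of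
component `m` after its first `c` columns. -/
def rightPart (lam : ℕ → ℕ → ℕ) (c m : ℕ) : ℕ → ℕ → ℕ := fun k r =>
  if k < m then lam k r else if k = m then lam m r - c else 0

/-- The multipartition `λ_T(r₀, m)`: components `1,…,m-1`, followed by the first `r₀`
rows of component `m`. -/
def topPart (lam : ℕ → ℕ → ℕ) (r₀ m : ℕ) : ℕ → ℕ → ℕ := fun k r =>
  if k < m then lam k r else if k = m then (if r ≤ r₀ then lam m r else 0) else 0

/-- The multipartition `λ_B(r₀, m)`: the rows of component `m` after row `r₀`, followed
by components `m+1,…,l`. -/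
def botPart (lam : ℕ → ℕ → ℕ) (r₀ m : ℕ) : ℕ → ℕ → ℕ := fun k r =>
  if k = 0 ∨ r = 0 then 0 else if k = 1 then lam m (r₀ + r) else lam (m + k - 1) r

/-- The glued tableau `t_L # t_R`: places `1,…,n_L` on the left part as in `t_L`, and
places `n_L + t_R(A)` at the node corresponding to each node `A` of the right part. -/
def glueLR (nL c m : ℕ) (tL tR : Node → ℕ) : Node → ℕ := fun A =>
  if A.2.2 < m then nL + tR A
  else if A.2.2 = m then
    (if A.2.1 ≤ c then tL (A.1, A.2.1, 1) else nL + tR (A.1, A.2.1 - c, m))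
  else tL (A.1, A.2.1, A.2.2 - m + 1)

/-- The tableau `t⁺` obtained from a tableau `t` of `μ_R(1,m)` by increasing all entries
by `k`, adjoining a first column with entries `1,…,k` to component `m`, and adjoining
empty components `m+1,…,l`. -/
def addFirstCol (k m : ℕ) (t : Node → ℕ) : Node → ℕ := fun A =>
  if A.2.2 = m then (if A.2.1 = 1 then A.1 else k + t (A.1, A.2.1 - 1, m))
  else k + t A

/-- The tableau `t⁺` obtained from a tableau `t` of `μ_L(d-1,m)` by adjoining empty
components `1,…,m-1` and adjoining a column `d` to component `m` with entries
`nk+1,…,nk+k` from top to bottom. -/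
def addLastCol (nk m d : ℕ) (t : Node → ℕ) : Node → ℕ := fun A =>
  if A.2.2 = m then (if A.2.1 = d then nk + A.1 else t (A.1, A.2.1, 1))
  else t (A.1, A.2.1, A.2.2 - m + 1)

/-- The `i`-th smallest element of a finite set of naturals (1-based). -/
def nthElt (S : Finset ℕ) (i : ℕ) : ℕ := (S.sort (· ≤ ·)).getD (i - 1) 0

/-- The set `S_B` of entries of `t_λ` lying in the bottom region (component `> m`, or
component `m` in a row `> r₀`). -/
noncomputable def SB (l n : ℕ) (lam : ℕ → ℕ → ℕ) (r₀ m : ℕ) : Finset ℕ :=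
  (Finset.Icc 1 n).filter fun i =>
    ∃ A, InDiag lam A ∧ colTab l n lam A = i ∧ (m < A.2.2 ∨ (A.2.2 = m ∧ r₀ < A.1))

/-- The glued tableau `t #̄ s`: on the bottom region the entries are `lab_B ∘ t` and on
the top region they are `lab_T ∘ s`, where `lab_B`, `lab_T` are the order-preserving
bijections onto `S_B`, `S_T`. -/
def glueBT (S_B S_T : Finset ℕ) (r₀ m : ℕ) (tB tT : Node → ℕ) : Node → ℕ := fun A =>
  if A.2.2 < m then nthElt S_T (tT A)
  else if A.2.2 = m then
    (if A.1 ≤ r₀ then nthElt S_T (tT A) else nthElt S_B (tB (A.1 - r₀, A.2.1, 1)))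
  else nthElt S_B (tB (A.1, A.2.1, A.2.2 - m + 1))

/-- The residue of a node `(r, c, m)` with respect to the multicharge `κ`:
`κ_m + c - r` in `ℤ/eℤ` (with `ZMod 0 = ℤ` encoding `e = ∞`). -/
def resNode (e : ℕ) (κ : ℕ → ZMod e) (A : Node) : ZMod e :=
  κ A.2.2 + (A.2.1 : ZMod e) - (A.1 : ZMod e)

section Aux

open Finset Equiv

theorem _root_.Equiv.Perm.apply_inv_self {α : Type*} (f : Equiv.Perm α) (x : α) : f (f⁻¹ x) = x :=
  f.apply_symm_apply x

theorem _root_.Equiv.Perm.inv_apply_self {α : Type*} (f : Equiv.Perm α) (x : α) : f⁻¹ (f x) = x :=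
  f.symm_apply_apply x

lemma wordProd_nil : wordProd [] = 1 := rfl

lemma wordProd_cons (p : ℕ) (L : List ℕ) : wordProd (p :: L) = sw p * wordProd L := by
  simp [wordProd]

lemma wordProd_append (L₁ L₂ : List ℕ) :
    wordProd (L₁ ++ L₂) = wordProd L₁ * wordProd L₂ := by
  simp [wordProd]

lemma wordProd_singleton (p : ℕ) : wordProd [p] = sw p := by
  simp [wordProd]

lemma permOf_one {n : ℕ} : PermOf n 1 := fun i _ => rfl

lemma permOf_mul {n : ℕ} {u v : Equiv.Perm ℕ} (hu : PermOf n u) (hv : PermOf n v) :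
    PermOf n (u * v) := by
  intro i hi
  have := hv i hi
  have := hu i hi
  simp [Equiv.Perm.mul_apply, *]

lemma permOf_inv {n : ℕ} {w : Equiv.Perm ℕ} (hw : PermOf n w) : PermOf n w⁻¹ := by
  intro i hi
  have h1 : w i = i := hw i hi
  calc w⁻¹ i = w⁻¹ (w i) := by rw [h1]
    _ = i := Equiv.Perm.inv_apply_self w i

lemma permOf_swap {n a b : ℕ} (ha1 : 1 ≤ a) (han : a ≤ n) (hb1 : 1 ≤ b) (hbn : b ≤ n) :
    PermOf n (Equiv.swap a b) := by
  intro i hi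
  apply Equiv.swap_apply_of_ne_of_ne <;> omega

lemma permOf_sw {n p : ℕ} (hp1 : 1 ≤ p) (hp2 : p + 1 ≤ n) : PermOf n (sw p) :=
  permOf_swap hp1 (by omega) (by omega) hp2

lemma permOf_wordProd {n : ℕ} {L : List ℕ} (h : ∀ p ∈ L, 1 ≤ p ∧ p + 1 ≤ n) :
    PermOf n (wordProd L) := by
  induction L with
  | nil => exact permOf_one
  | cons p M ih =>
    rw [wordProd_cons]
    have hp := h p (by simp)
    exact permOf_mul (permOf_sw hp.1 hp.2) (ih fun q hq => h q (by simp [hq]))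

lemma PermOf.apply_mem {n : ℕ} {w : Equiv.Perm ℕ} (hw : PermOf n w) {x : ℕ}
    (h1 : 1 ≤ x) (h2 : x ≤ n) : 1 ≤ w x ∧ w x ≤ n := by
  constructor
  · by_contra h
    have h0 : w x = 0 := by omega
    have : w 0 = 0 := hw 0 (Or.inl rfl)
    have : x = 0 := w.injective (by rw [h0, this])
    omega
  · by_contra h
    push_neg at h
    have h3 : w (w x) = w x := hw (w x) (Or.inr h)
    have : w x = x := w.injective h3
    omega

/-- The inversion set of `w` relative to `{1,…,n}`. -/
noncomputable def invSet (n : ℕ) (w : Equiv.Perm ℕ) : Finset (ℕ × ℕ) :=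
  (Finset.Icc 1 n ×ˢ Finset.Icc 1 n).filter fun q => q.1 < q.2 ∧ w q.2 < w q.1

/-- The number of inversions of `w` relative to `{1,…,n}`. -/
noncomputable def invNum (n : ℕ) (w : Equiv.Perm ℕ) : ℕ := (invSet n w).card

lemma mem_invSet {n : ℕ} {w : Equiv.Perm ℕ} {q : ℕ × ℕ} :
    q ∈ invSet n w ↔ (1 ≤ q.1 ∧ q.1 ≤ n) ∧ (1 ≤ q.2 ∧ q.2 ≤ n) ∧ q.1 < q.2 ∧ w q.2 < w q.1 := by
  simp [invSet, Finset.mem_filter, Finset.mem_product, Finset.mem_Icc, and_assoc]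

lemma invNum_one (n : ℕ) : invNum n 1 = 0 := by
  rw [invNum, Finset.card_eq_zero]
  apply Finset.eq_empty_of_forall_notMem
  intro q hq
  rw [mem_invSet] at hq
  simp only [Equiv.Perm.one_apply] at hq
  omega

lemma sw_flip {p x y : ℕ} (hxy : x < y) (h : ¬ sw p x < sw p y) : x = p ∧ y = p + 1 := by
  simp only [sw, Equiv.swap_apply_def] at h
  split_ifs at h <;> omega

lemma sw_apply_mem {n p x : ℕ} (hp1 : 1 ≤ p) (hp2 : p + 1 ≤ n) (h1 : 1 ≤ x) (h2 : x ≤ n) :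
    1 ≤ sw p x ∧ sw p x ≤ n := by
  simp only [sw, Equiv.swap_apply_def]
  split_ifs <;> omega

lemma invNum_sw_mul_le (n p : ℕ) (w : Equiv.Perm ℕ) :
    invNum n (sw p * w) ≤ invNum n w + 1 := by
  have hsub : invSet n (sw p * w) ⊆ insert (w.symm p, w.symm (p + 1)) (invSet n w) := by
    intro q hq
    rw [mem_invSet] at hq
    obtain ⟨h1, h2, hlt, hv⟩ := hq
    simp only [Equiv.Perm.mul_apply] at hv
    rcases lt_trichotomy (w q.2) (w q.1) with h | h | h
    · exact Finset.mem_insert_of_mem (mem_invSet.2 ⟨h1, h2, hlt, h⟩)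
    · exact absurd (w.injective h) (by omega)
    · obtain ⟨ha, hb⟩ := sw_flip (p := p) h (by omega)
      have e1 : q.1 = w.symm p := by rw [← ha, Equiv.symm_apply_apply]
      have e2 : q.2 = w.symm (p + 1) := by rw [← hb, Equiv.symm_apply_apply]
      have : q = (w.symm p, w.symm (p + 1)) := Prod.ext e1 e2
      rw [this]
      exact Finset.mem_insert_self _ _
  calc invNum n (sw p * w) ≤ (insert (w.symm p, w.symm (p + 1)) (invSet n w)).card :=
        Finset.card_le_card hsub
    _ ≤ invNum n w + 1 := Finset.card_insert_le _ _

lemma invNum_sw_mul_lt {n p : ℕ} {w : Equiv.Perm ℕ} (hp1 : 1 ≤ p) (hp2 : p + 1 ≤ n)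
    (hw : PermOf n w) (hd : w.symm (p + 1) < w.symm p) :
    invNum n (sw p * w) < invNum n w := by
  have hx0 := (permOf_inv hw).apply_mem (x := p) hp1 (by omega)
  have hy0 := (permOf_inv hw).apply_mem (x := p + 1) (by omega) hp2
  simp only [← Equiv.Perm.inv_def] at *
  have hpair : (w⁻¹ (p + 1), w⁻¹ p) ∈ invSet n w := by
    rw [mem_invSet]
    refine ⟨hy0, hx0, hd, ?_⟩
    rw [Equiv.Perm.apply_inv_self, Equiv.Perm.apply_inv_self]
    omega
  have hsub : invSet n (sw p * w) ⊆ (invSet n w).erase (w⁻¹ (p + 1), w⁻¹ p) := by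
    intro q hq
    rw [mem_invSet] at hq
    obtain ⟨h1, h2, hlt, hv⟩ := hq
    simp only [Equiv.Perm.mul_apply] at hv
    rcases lt_trichotomy (w q.2) (w q.1) with h | h | h
    · rw [Finset.mem_erase]
      refine ⟨?_, mem_invSet.2 ⟨h1, h2, hlt, h⟩⟩
      intro heq
      have hq1 : q.1 = w⁻¹ (p + 1) := by rw [heq]
      have hq2 : q.2 = w⁻¹ p := by rw [heq]
      rw [hq1, hq2, Equiv.Perm.apply_inv_self, Equiv.Perm.apply_inv_self] at hv
      simp only [sw, Equiv.swap_apply_left, Equiv.swap_apply_right] at hv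
      omega
    · exact absurd (w.injective h) (by omega)
    · obtain ⟨ha, hb⟩ := sw_flip (p := p) h (by omega)
      have e1 : q.1 = w⁻¹ p := by rw [← ha]; exact (Equiv.Perm.inv_apply_self w q.1).symm
      have e2 : q.2 = w⁻¹ (p + 1) := by rw [← hb]; exact (Equiv.Perm.inv_apply_self w q.2).symm
      rw [e1, e2] at hlt
      omega
  calc invNum n (sw p * w) ≤ ((invSet n w).erase (w⁻¹ (p + 1), w⁻¹ p)).card :=
        Finset.card_le_card hsub
    _ < invNum n w := Finset.card_erase_lt_of_mem hpair

lemma invNum_sw_mul_asc {n p : ℕ} {w : Equiv.Perm ℕ} (hp1 : 1 ≤ p) (hp2 : p + 1 ≤ n)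
    (hw : PermOf n w) (hd : w.symm p < w.symm (p + 1)) :
    invNum n (sw p * w) = invNum n w + 1 := by
  have hx0 := (permOf_inv hw).apply_mem (x := p) hp1 (by omega)
  have hy0 := (permOf_inv hw).apply_mem (x := p + 1) (by omega) hp2
  simp only [← Equiv.Perm.inv_def] at *
  have hset : invSet n (sw p * w) = insert (w⁻¹ p, w⁻¹ (p + 1)) (invSet n w) := by
    apply Finset.Subset.antisymm
    · have hsub : invSet n (sw p * w) ⊆ insert (w.symm p, w.symm (p + 1)) (invSet n w) := by
        intro q hq
        rw [mem_invSet] at hq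
        obtain ⟨h1, h2, hlt, hv⟩ := hq
        simp only [Equiv.Perm.mul_apply] at hv
        rcases lt_trichotomy (w q.2) (w q.1) with h | h | h
        · exact Finset.mem_insert_of_mem (mem_invSet.2 ⟨h1, h2, hlt, h⟩)
        · exact absurd (w.injective h) (by omega)
        · obtain ⟨ha, hb⟩ := sw_flip (p := p) h (by omega)
          have e1 : q.1 = w.symm p := by rw [← ha, Equiv.symm_apply_apply]
          have e2 : q.2 = w.symm (p + 1) := by rw [← hb, Equiv.symm_apply_apply]
          have heq : q = (w.symm p, w.symm (p + 1)) := Prod.ext e1 e2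
          rw [heq]
          exact Finset.mem_insert_self _ _
      simpa only [Equiv.Perm.inv_def] using hsub
    · intro q hq
      rcases Finset.mem_insert.1 hq with rfl | hq
      · rw [mem_invSet]
        refine ⟨hx0, hy0, hd, ?_⟩
        simp only [Equiv.Perm.mul_apply, Equiv.Perm.apply_inv_self]
        simp only [sw, Equiv.swap_apply_left, Equiv.swap_apply_right]
        omega
      · rw [mem_invSet] at hq ⊢
        obtain ⟨h1, h2, hlt, hv⟩ := hq
        refine ⟨h1, h2, hlt, ?_⟩
        simp only [Equiv.Perm.mul_apply]
        by_contra hcon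
        obtain ⟨ha, hb⟩ := sw_flip (p := p) hv (by omega)
        have e1 : q.2 = w⁻¹ p := by rw [← ha]; exact (Equiv.Perm.inv_apply_self w q.2).symm
        have e2 : q.1 = w⁻¹ (p + 1) := by rw [← hb]; exact (Equiv.Perm.inv_apply_self w q.1).symm
        rw [e1, e2] at hlt
        omega
  rw [invNum, hset, Finset.card_insert_of_notMem, invNum]
  intro hmem
  rw [mem_invSet] at hmem
  simp only [Equiv.Perm.apply_inv_self] at hmem
  omega

lemma invNum_inv {n : ℕ} {w : Equiv.Perm ℕ} (hw : PermOf n w) :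
    invNum n w⁻¹ = invNum n w := by
  apply Finset.card_bij' (fun q _ => ((w⁻¹ q.2 : ℕ), (w⁻¹ q.1 : ℕ)))
      (fun q _ => ((w q.2 : ℕ), (w q.1 : ℕ)))
  · intro q hq
    rw [mem_invSet] at hq ⊢
    obtain ⟨h1, h2, hlt, hv⟩ := hq
    simp only [Equiv.Perm.apply_inv_self]
    exact ⟨(permOf_inv hw).apply_mem h2.1 h2.2, (permOf_inv hw).apply_mem h1.1 h1.2, hv, hlt⟩
  · intro q hq
    rw [mem_invSet] at hq ⊢
    obtain ⟨h1, h2, hlt, hv⟩ := hq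
    simp only [Equiv.Perm.inv_apply_self]
    exact ⟨hw.apply_mem h2.1 h2.2, hw.apply_mem h1.1 h1.2, hv, hlt⟩
  · intro q _
    simp
  · intro q _
    simp

lemma invNum_mul_sw_le {n p : ℕ} {w : Equiv.Perm ℕ} (hw : PermOf n w)
    (hp1 : 1 ≤ p) (hp2 : p + 1 ≤ n) :
    invNum n (w * sw p) ≤ invNum n w + 1 := by
  have hperm : PermOf n (w * sw p) := permOf_mul hw (permOf_sw hp1 hp2)
  have h1 : (w * sw p)⁻¹ = sw p * w⁻¹ := by
    rw [mul_inv_rev, sw, Equiv.swap_inv]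
  calc invNum n (w * sw p) = invNum n (sw p * w⁻¹) := by rw [← invNum_inv hperm, h1]
    _ ≤ invNum n w⁻¹ + 1 := invNum_sw_mul_le n p w⁻¹
    _ = invNum n w + 1 := by rw [invNum_inv hw]

lemma invNum_mul_sw_desc {n p : ℕ} {w : Equiv.Perm ℕ} (hw : PermOf n w)
    (hp1 : 1 ≤ p) (hp2 : p + 1 ≤ n) (hd : w (p + 1) < w p) :
    invNum n (w * sw p) < invNum n w := by
  have hperm : PermOf n (w * sw p) := permOf_mul hw (permOf_sw hp1 hp2)
  have h1 : (w * sw p)⁻¹ = sw p * w⁻¹ := by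
    rw [mul_inv_rev, sw, Equiv.swap_inv]
  have h2 : invNum n (sw p * w⁻¹) < invNum n w⁻¹ := by
    apply invNum_sw_mul_lt hp1 hp2 (permOf_inv hw)
    simpa [Equiv.Perm.inv_def] using hd
  calc invNum n (w * sw p) = invNum n (sw p * w⁻¹) := by rw [← invNum_inv hperm, h1]
    _ < invNum n w⁻¹ := h2
    _ = invNum n w := invNum_inv hw

lemma invNum_mul_sw_asc {n p : ℕ} {w : Equiv.Perm ℕ} (hw : PermOf n w)
    (hp1 : 1 ≤ p) (hp2 : p + 1 ≤ n) (hd : w p < w (p + 1)) :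
    invNum n (w * sw p) = invNum n w + 1 := by
  have hperm : PermOf n (w * sw p) := permOf_mul hw (permOf_sw hp1 hp2)
  have h1 : (w * sw p)⁻¹ = sw p * w⁻¹ := by
    rw [mul_inv_rev, sw, Equiv.swap_inv]
  have h2 : invNum n (sw p * w⁻¹) = invNum n w⁻¹ + 1 := by
    apply invNum_sw_mul_asc hp1 hp2 (permOf_inv hw)
    simpa [Equiv.Perm.inv_def] using hd
  calc invNum n (w * sw p) = invNum n (sw p * w⁻¹) := by rw [← invNum_inv hperm, h1]
    _ = invNum n w⁻¹ + 1 := h2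
    _ = invNum n w + 1 := by rw [invNum_inv hw]

lemma invNum_wordProd_le (n : ℕ) (L : List ℕ) : invNum n (wordProd L) ≤ L.length := by
  induction L with
  | nil => simp [wordProd_nil, invNum_one]
  | cons p M ih =>
    rw [wordProd_cons]
    calc invNum n (sw p * wordProd M) ≤ invNum n (wordProd M) + 1 := invNum_sw_mul_le _ _ _
      _ ≤ M.length + 1 := by omega
      _ = (p :: M).length := by simp

lemma permOf_eq_one {n : ℕ} {w : Equiv.Perm ℕ} (hw : PermOf n w) (h0 : invNum n w = 0) :
    w = 1 := by
  have hempty : invSet n w = ∅ := Finset.card_eq_zero.1 h0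
  have hcons : ∀ p, 1 ≤ p → p + 1 ≤ n → w p < w (p + 1) := by
    intro p h1 h2
    have hne : w p ≠ w (p + 1) := fun h => by have := w.injective h; omega
    have hnlt : ¬ w (p + 1) < w p := by
      intro hlt
      have : (p, p + 1) ∈ invSet n w :=
        mem_invSet.2 ⟨⟨h1, by omega⟩, ⟨by omega, h2⟩, by omega, hlt⟩
      rw [hempty] at this
      exact absurd this (Finset.notMem_empty _)
    omega
  have hmono : ∀ d x, 1 ≤ x → x + d ≤ n → w x + d ≤ w (x + d) := by
    intro d
    induction d with
    | zero => simp
    | succ d ihd =>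
      intro x h1 h2
      have ha := ihd x h1 (by omega)
      have hb := hcons (x + d) (by omega) (by omega)
      have he : x + (d + 1) = (x + d) + 1 := by omega
      rw [he]
      omega
  have hfix : ∀ x, 1 ≤ x → x ≤ n → w x = x := by
    intro x h1 h2
    have hw1 := hw.apply_mem (x := 1) le_rfl (by omega)
    have hwn := hw.apply_mem (x := x) h1 h2
    have hlow : x ≤ w x := by
      have := hmono (x - 1) 1 le_rfl (by omega)
      have he : 1 + (x - 1) = x := by omega
      rw [he] at this
      omega
    have hhigh : w x ≤ x := by
      have := hmono (n - x) x h1 (by omega)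
      have he : x + (n - x) = n := by omega
      rw [he] at this
      have := hw.apply_mem (x := n) (by omega) le_rfl
      omega
    omega
  apply Equiv.ext
  intro i
  rcases Nat.eq_zero_or_pos i with rfl | h1
  · exact hw 0 (Or.inl rfl)
  rcases le_or_gt i n with h2 | h2
  · simpa using hfix i h1 h2
  · exact hw i (Or.inr h2)

lemma exists_descent {n : ℕ} {w : Equiv.Perm ℕ} (h0 : invNum n w ≠ 0) :
    ∃ p, 1 ≤ p ∧ p + 1 ≤ n ∧ w (p + 1) < w p := by
  by_contra hcon
  push_neg at hcon
  apply h0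
  rw [invNum, Finset.card_eq_zero]
  apply Finset.eq_empty_of_forall_notMem
  intro q hq
  rw [mem_invSet] at hq
  obtain ⟨h1, h2, hlt, hv⟩ := hq
  have hmono : ∀ d x, 1 ≤ x → x + d ≤ n → w x ≤ w (x + d) := by
    intro d
    induction d with
    | zero => simp
    | succ d ihd =>
      intro x hx1 hx2
      have ha := ihd x hx1 (by omega)
      have hb := hcon (x + d) (by omega) (by omega)
      have he : x + (d + 1) = (x + d) + 1 := by omega
      rw [he]
      omega
  have := hmono (q.2 - q.1) q.1 h1.1 (by omega)
  have he : q.1 + (q.2 - q.1) = q.2 := by omega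
  rw [he] at this
  omega

lemma exists_word (n : ℕ) : ∀ k (w : Equiv.Perm ℕ), PermOf n w → invNum n w ≤ k →
    ∃ L : List ℕ, (∀ p ∈ L, 1 ≤ p ∧ p + 1 ≤ n) ∧ wordProd L = w ∧ L.length = invNum n w := by
  intro k
  induction k with
  | zero =>
    intro w hw hk
    refine ⟨[], by simp, ?_, by simp; omega⟩
    rw [permOf_eq_one hw (by omega), wordProd_nil]
  | succ k ih =>
    intro w hw hk
    by_cases h0 : invNum n w = 0
    · refine ⟨[], by simp, ?_, by simp; omega⟩
      rw [permOf_eq_one hw h0, wordProd_nil]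
    · obtain ⟨p, hp1, hp2, hd⟩ := exists_descent h0
      have hw' : PermOf n (w * sw p) := permOf_mul hw (permOf_sw hp1 hp2)
      have hlt : invNum n (w * sw p) < invNum n w := invNum_mul_sw_desc hw hp1 hp2 hd
      have hcancel : w * sw p * sw p = w := by
        rw [mul_assoc, sw, Equiv.swap_mul_self, mul_one]
      have hge : invNum n w ≤ invNum n (w * sw p) + 1 := by
        have := invNum_mul_sw_le hw' hp1 hp2
        rwa [hcancel] at this
      obtain ⟨L, hL, hprod, hlen⟩ := ih (w * sw p) hw' (by omega)
      refine ⟨L ++ [p], ?_, ?_, ?_⟩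
      · intro q hq
        rcases List.mem_append.1 hq with h | h
        · exact hL q h
        · simp at h
          omega
      · rw [wordProd_append, hprod, wordProd_singleton, hcancel]
      · simp only [List.length_append, List.length_singleton, hlen]
        omega

lemma len_eq_invNum {n : ℕ} {w : Equiv.Perm ℕ} (hw : PermOf n w) :
    len n w = invNum n w := by
  obtain ⟨L, hL, hprod, hlen⟩ := exists_word n (invNum n w) w hw le_rfl
  have hmem : invNum n w ∈ {k | ∃ L, IsWord n L w ∧ L.length = k} :=
    ⟨L, ⟨hL, hprod⟩, hlen⟩
  apply le_antisymm
  · exact Nat.sInf_le hmem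
  · obtain ⟨L₀, ⟨hL₀, hprod₀⟩, hlen₀⟩ := Nat.sInf_mem (Set.nonempty_of_mem hmem)
    rw [len, ← hlen₀, ← hprod₀]
    exact invNum_wordProd_le n L₀

lemma swap_flip_cases {a b x y : ℕ} (hab : a < b) (hxy : x < y)
    (h : ¬ Equiv.swap a b x < Equiv.swap a b y) :
    (x = a ∧ y = b) ∨ (x = a ∧ a < y ∧ y < b) ∨ (y = b ∧ a < x ∧ x < b) := by
  simp only [Equiv.swap_apply_def] at h
  split_ifs at h <;> omega

lemma swap_mem_Icc {n a b x : ℕ} (ha1 : 1 ≤ a) (han : a ≤ n) (hb1 : 1 ≤ b) (hbn : b ≤ n)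
    (h1 : 1 ≤ x) (h2 : x ≤ n) : 1 ≤ Equiv.swap a b x ∧ Equiv.swap a b x ≤ n := by
  simp only [Equiv.swap_apply_def]
  split_ifs <;> omega

lemma invNum_add_one_le_mul_swap {n a b : ℕ} {w : Equiv.Perm ℕ} (ha1 : 1 ≤ a) (han : a ≤ n)
    (hb1 : 1 ≤ b) (hbn : b ≤ n) (hab : a < b) (hv : w a < w b) :
    invNum n w + 1 ≤ invNum n (w * Equiv.swap a b) := by
  set σ := Equiv.swap a b with hσ
  set w' := w * σ with hw'
  have happ : ∀ x, w' x = w (σ x) := fun x => rfl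
  have hσa : σ a = b := Equiv.swap_apply_left a b
  have hσb : σ b = a := Equiv.swap_apply_right a b
  have hσσ : ∀ x, σ (σ x) = x := fun x => Equiv.swap_apply_self a b x
  have hσo : ∀ x, x ≠ a → x ≠ b → σ x = x := fun x hx1 hx2 =>
    Equiv.swap_apply_of_ne_of_ne hx1 hx2
  have habmem : (a, b) ∈ invSet n w' := by
    rw [mem_invSet]
    refine ⟨⟨ha1, han⟩, ⟨hb1, hbn⟩, hab, ?_⟩
    rw [happ, happ, hσa, hσb]
    exact hv
  have hmaps : ∀ q ∈ invSet n w,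
      (if σ q.1 < σ q.2 then (σ q.1, σ q.2) else q) ∈ (invSet n w').erase (a, b) := by
    intro q hq
    rw [mem_invSet] at hq
    obtain ⟨h1, h2, hlt, hqv⟩ := hq
    by_cases hcase : σ q.1 < σ q.2
    · rw [if_pos hcase, Finset.mem_erase]
      constructor
      · intro heq
        have e1 : σ q.1 = a := congrArg Prod.fst heq
        have e2 : σ q.2 = b := congrArg Prod.snd heq
        have g1 : q.1 = b := σ.injective (by rw [e1, hσb])
        have g2 : q.2 = a := σ.injective (by rw [e2, hσa])
        omega
      · rw [mem_invSet]
        refine ⟨swap_mem_Icc ha1 han hb1 hbn h1.1 h1.2,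
          swap_mem_Icc ha1 han hb1 hbn h2.1 h2.2, hcase, ?_⟩
        rw [happ, happ, hσσ, hσσ]
        exact hqv
    · rw [if_neg hcase]
      rcases swap_flip_cases hab hlt hcase with ⟨e1, e2⟩ | ⟨e1, e2, e3⟩ | ⟨e1, e2, e3⟩
      · rw [e1, e2] at hqv
        omega
      · rw [Finset.mem_erase]
        refine ⟨by intro heq; have := congrArg Prod.snd heq; simp at this; omega, ?_⟩
        rw [mem_invSet]
        refine ⟨h1, h2, hlt, ?_⟩
        rw [happ, happ, e1, hσa, hσo q.2 (by omega) (by omega)]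
        rw [e1] at hqv
        omega
      · rw [Finset.mem_erase]
        refine ⟨by intro heq; have := congrArg Prod.fst heq; simp at this; omega, ?_⟩
        rw [mem_invSet]
        refine ⟨h1, h2, hlt, ?_⟩
        rw [happ, happ, e1, hσb, hσo q.1 (by omega) (by omega)]
        rw [e1] at hqv
        omega
  have hinj : Set.InjOn (fun q : ℕ × ℕ => if σ q.1 < σ q.2 then (σ q.1, σ q.2) else q)
      ↑(invSet n w) := by
    intro q1 hq1 q2 hq2 heq
    simp only at heq
    rw [Finset.mem_coe, mem_invSet] at hq1 hq2
    obtain ⟨h11, h12, hlt1, hv1⟩ := hq1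
    obtain ⟨h21, h22, hlt2, hv2⟩ := hq2
    by_cases hc1 : σ q1.1 < σ q1.2 <;> by_cases hc2 : σ q2.1 < σ q2.2
    · rw [if_pos hc1, if_pos hc2] at heq
      have e1 : σ q1.1 = σ q2.1 := congrArg Prod.fst heq
      have e2 : σ q1.2 = σ q2.2 := congrArg Prod.snd heq
      exact Prod.ext (σ.injective e1) (σ.injective e2)
    · rw [if_pos hc1, if_neg hc2] at heq
      exfalso
      rcases swap_flip_cases hab hlt2 hc2 with ⟨e1, e2⟩ | ⟨e1, e2, e3⟩ | ⟨e1, e2, e3⟩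
      · rw [e1, e2] at hv2; omega
      · -- q2 = (a, y), a < y < b ; heq : (σ q1.1, σ q1.2) = q2
        have f1 : σ q1.1 = q2.1 := congrArg Prod.fst heq
        have f2 : σ q1.2 = q2.2 := congrArg Prod.snd heq
        have g1 : q1.1 = b := σ.injective (by rw [f1, e1, hσb])
        have g2 : q1.2 = q2.2 := by
          have h' : σ q2.2 = q2.2 := hσo q2.2 (by omega) (by omega)
          exact σ.injective (by rw [f2, h'])
        omega
      · -- q2 = (x, b), a < x < b
        have f1 : σ q1.1 = q2.1 := congrArg Prod.fst heq
        have f2 : σ q1.2 = q2.2 := congrArg Prod.snd heq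
        have g2 : q1.2 = a := by
          apply σ.injective
          rw [f2, e1, hσa]
        have g1 : q1.1 = q2.1 := by
          have h' : σ q2.1 = q2.1 := hσo q2.1 (by omega) (by omega)
          exact σ.injective (by rw [f1, h'])
        omega
    · rw [if_neg hc1, if_pos hc2] at heq
      exfalso
      rcases swap_flip_cases hab hlt1 hc1 with ⟨e1, e2⟩ | ⟨e1, e2, e3⟩ | ⟨e1, e2, e3⟩
      · rw [e1, e2] at hv1; omega
      · have f1 : q1.1 = σ q2.1 := congrArg Prod.fst heq
        have f2 : q1.2 = σ q2.2 := congrArg Prod.snd heq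
        have g1 : q2.1 = b := σ.injective (by rw [← f1, e1, hσb])
        have g2 : q2.2 = q1.2 := by
          have h' : σ q1.2 = q1.2 := hσo q1.2 (by omega) (by omega)
          exact σ.injective (by rw [← f2, h'])
        omega
      · have f1 : q1.1 = σ q2.1 := congrArg Prod.fst heq
        have f2 : q1.2 = σ q2.2 := congrArg Prod.snd heq
        have g2 : q2.2 = a := σ.injective (by rw [← f2, e1, hσa])
        have g1 : q2.1 = q1.1 := by
          have h' : σ q1.1 = q1.1 := hσo q1.1 (by omega) (by omega)
          exact σ.injective (by rw [← f1, h'])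
        omega
    · rw [if_neg hc1, if_neg hc2] at heq
      exact heq
  have hcard := Finset.card_le_card_of_injOn _ hmaps hinj
  have h1 : 1 ≤ (invSet n w').card := Finset.card_pos.2 ⟨_, habmem⟩
  rw [Finset.card_erase_of_mem habmem] at hcard
  rw [invNum, invNum]
  omega

/-- One step down in the Bruhat order. -/
def StepRel (n : ℕ) (u w : Equiv.Perm ℕ) : Prop :=
  ∃ a b, 1 ≤ a ∧ a ≤ n ∧ 1 ≤ b ∧ b ≤ n ∧ a ≠ b ∧ u = w * Equiv.swap a b ∧
    invNum n u < invNum n w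

/-- Chain order generated by Bruhat steps. -/
def BLe (n : ℕ) (u w : Equiv.Perm ℕ) : Prop := Relation.ReflTransGen (StepRel n) u w

lemma StepRel.permOf {n : ℕ} {u w : Equiv.Perm ℕ} (h : StepRel n u w) (hw : PermOf n w) :
    PermOf n u := by
  obtain ⟨a, b, ha1, han, hb1, hbn, hab, heq, hlt⟩ := h
  rw [heq]
  exact permOf_mul hw (permOf_swap ha1 han hb1 hbn)

lemma StepRel.exists_desc {n : ℕ} {u w : Equiv.Perm ℕ} (h : StepRel n u w) :
    ∃ a b, 1 ≤ a ∧ a ≤ n ∧ 1 ≤ b ∧ b ≤ n ∧ a < b ∧ w b < w a ∧ u = w * Equiv.swap a b := by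
  obtain ⟨a, b, ha1, han, hb1, hbn, hab, heq, hlt⟩ := h
  rcases Nat.lt_or_ge a b with hlt' | hge
  · refine ⟨a, b, ha1, han, hb1, hbn, hlt', ?_, heq⟩
    rcases lt_trichotomy (w a) (w b) with h' | h' | h'
    · have := invNum_add_one_le_mul_swap ha1 han hb1 hbn hlt' h'
      rw [← heq] at this
      omega
    · exact absurd (w.injective h') hab
    · exact h'
  · have hba : b < a := by omega
    have heq' : u = w * Equiv.swap b a := by rw [heq, Equiv.swap_comm]
    refine ⟨b, a, hb1, hbn, ha1, han, hba, ?_, heq'⟩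
    rcases lt_trichotomy (w b) (w a) with h' | h' | h'
    · have := invNum_add_one_le_mul_swap hb1 hbn ha1 han hba h'
      rw [← heq'] at this
      omega
    · exact absurd (w.injective h') (Ne.symm hab)
    · exact h'

lemma StepRel.invNum_lt {n : ℕ} {u w : Equiv.Perm ℕ} (h : StepRel n u w) :
    invNum n u < invNum n w := by
  obtain ⟨a, b, _, _, _, _, _, _, hlt⟩ := h
  exact hlt

lemma key_step {n j : ℕ} {M : ℕ → ℕ} (hM : ∀ i i', 1 ≤ i' → i' ≤ i → i ≤ j → M i' ≤ M i)
    {y y' : Equiv.Perm ℕ} (hy : PermOf n y) (hstep : StepRel n y' y)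
    (hP : ∀ i, 1 ≤ i → i ≤ j → y.symm i ≤ M i) :
    ∀ i, 1 ≤ i → i ≤ j → y'.symm i ≤ M i := by
  obtain ⟨a, b, ha1, han, hb1, hbn, hab, hvb, heq⟩ := hstep.exists_desc
  intro i hi1 hij
  have hsymm : y'.symm i = Equiv.swap a b (y.symm i) := by
    rw [Equiv.symm_apply_eq, heq]
    show i = y (Equiv.swap a b (Equiv.swap a b (y.symm i)))
    rw [Equiv.swap_apply_self, Equiv.apply_symm_apply]
  rw [hsymm]
  rcases eq_or_ne (y.symm i) a with h | h
  · rw [h, Equiv.swap_apply_left]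
    have hia : y a = i := by rw [← h, Equiv.apply_symm_apply]
    have h1 : 1 ≤ y b := (hy.apply_mem hb1 hbn).1
    have h2 : y b < i := by rw [← hia]; exact hvb
    have h3 := hP (y b) h1 (by omega)
    rw [Equiv.symm_apply_apply] at h3
    exact le_trans h3 (hM i (y b) h1 (by omega) hij)
  rcases eq_or_ne (y.symm i) b with h2 | h2
  · rw [h2, Equiv.swap_apply_right]
    have := hP i hi1 hij
    rw [h2] at this
    omega
  · rw [Equiv.swap_apply_of_ne_of_ne h h2]
    exact hP i hi1 hij

lemma BLe.preserve {n j : ℕ} {u w : Equiv.Perm ℕ} (hch : BLe n u w) (hw : PermOf n w)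
    (M : ℕ → ℕ) (hM : ∀ i i', 1 ≤ i' → i' ≤ i → i ≤ j → M i' ≤ M i)
    (hP : ∀ i, 1 ≤ i → i ≤ j → w.symm i ≤ M i) :
    PermOf n u ∧ ∀ i, 1 ≤ i → i ≤ j → u.symm i ≤ M i := by
  induction hch using Relation.ReflTransGen.head_induction_on with
  | refl => exact ⟨hw, hP⟩
  | head h' _ ih =>
    exact ⟨h'.permOf ih.1, key_step hM ih.1 h' ih.2⟩

lemma strong_exchange :
    ∀ L : List ℕ, ∀ a b : ℕ, a < b → wordProd L b < wordProd L a →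
      ∃ L₁ q L₂, L = L₁ ++ q :: L₂ ∧ wordProd (L₁ ++ L₂) = wordProd L * Equiv.swap a b := by
  intro L
  induction L with
  | nil =>
    intro a b hab hv
    rw [wordProd_nil] at hv
    simp only [Equiv.Perm.one_apply] at hv
    omega
  | cons p M ih =>
    intro a b hab hv
    rw [wordProd_cons] at hv
    simp only [Equiv.Perm.mul_apply] at hv
    rcases lt_trichotomy (wordProd M a) (wordProd M b) with h | h | h
    · obtain ⟨hpa, hpb⟩ := sw_flip (p := p) h (by omega)
      refine ⟨[], p, M, rfl, ?_⟩
      have h2 : wordProd (p :: M) * Equiv.swap a b = wordProd M := by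
        rw [wordProd_cons, mul_assoc, Equiv.mul_swap_eq_swap_mul, hpa, hpb, ← mul_assoc]
        show sw p * Equiv.swap p (p + 1) * wordProd M = wordProd M
        rw [sw, Equiv.swap_mul_self, one_mul]
      rw [List.nil_append, h2]
    · exact absurd ((wordProd M).injective h) (by omega)
    · obtain ⟨M₁, q, M₂, rfl, hM⟩ := ih a b hab h
      refine ⟨p :: M₁, q, M₂, rfl, ?_⟩
      rw [List.cons_append, wordProd_cons, wordProd_cons, hM, mul_assoc]

lemma wordProd_delete (L₁ L₂ : List ℕ) (q : ℕ) :
    wordProd (L₁ ++ L₂) =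
      wordProd (L₁ ++ q :: L₂) * Equiv.swap ((wordProd L₂)⁻¹ q) ((wordProd L₂)⁻¹ (q + 1)) := by
  have h1 : wordProd L₂ * Equiv.swap ((wordProd L₂)⁻¹ q) ((wordProd L₂)⁻¹ (q + 1)) =
      sw q * wordProd L₂ := by
    rw [Equiv.mul_swap_eq_swap_mul, Equiv.Perm.apply_inv_self, Equiv.Perm.apply_inv_self]
    rfl
  rw [wordProd_append, wordProd_append, wordProd_cons, mul_assoc, mul_assoc, h1, ← mul_assoc (sw q)]
  rw [sw, Equiv.swap_mul_self, one_mul]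

lemma concat_inj {L₁ L₂ : List ℕ} {a b : ℕ} (h : L₁ ++ [a] = L₂ ++ [b]) :
    L₁ = L₂ ∧ a = b := by
  have h' := congrArg List.reverse h
  simp only [List.reverse_append, List.reverse_singleton, List.singleton_append,
    List.cons.injEq] at h'
  exact ⟨by have := congrArg List.reverse h'.2; simpa using this, h'.1⟩

lemma dstep {n p : ℕ} {y y' : Equiv.Perm ℕ} (hp1 : 1 ≤ p) (hp2 : p + 1 ≤ n)
    (hy : PermOf n y) (hdesc : invNum n (y * sw p) < invNum n y) (hstep : StepRel n y' y) :
    BLe n (y' * sw p) y := by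
  have hzperm : PermOf n (y * sw p) := permOf_mul hy (permOf_sw hp1 hp2)
  have hcancel : y * sw p * sw p = y := by
    rw [mul_assoc, sw, Equiv.swap_mul_self, mul_one]
  have hyz : invNum n y ≤ invNum n (y * sw p) + 1 := by
    have := invNum_mul_sw_le hzperm hp1 hp2
    rwa [hcancel] at this
  obtain ⟨LM, hLM, hprodM, hlenM⟩ := exists_word n (invNum n (y * sw p)) (y * sw p) hzperm le_rfl
  have hprodY : wordProd (LM ++ [p]) = y := by
    rw [wordProd_append, hprodM, wordProd_singleton, hcancel]
  obtain ⟨a, b, ha1, han, hb1, hbn, hab, hvb, hy'⟩ := hstep.exists_desc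
  obtain ⟨L₁, q, L₂, hsplit, hprod'⟩ :=
    strong_exchange (LM ++ [p]) a b hab (by rw [hprodY]; exact hvb)
  rw [hprodY, ← hy'] at hprod'
  rcases L₂.eq_nil_or_concat with rfl | ⟨L₂', r, rfl⟩
  · -- deletion of the final letter
    obtain ⟨rfl, rfl⟩ : LM = L₁ ∧ p = q := concat_inj hsplit
    have : y' = y * sw p := by rw [← hprod', List.append_nil, hprodM]
    rw [this, hcancel]
    exact Relation.ReflTransGen.refl
  · -- deletion inside LM
    rw [List.concat_eq_append] at hsplit hprod'
    have hsplit' : LM = L₁ ++ q :: L₂' ∧ p = r := by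
      have h2 : LM ++ [p] = (L₁ ++ q :: L₂') ++ [r] := by
        rw [hsplit]
        simp
      exact concat_inj h2
    obtain ⟨hLMeq, rfl⟩ := hsplit'
    have hys : y' * sw p = wordProd (L₁ ++ L₂') := by
      have : wordProd (L₁ ++ (L₂' ++ [p])) = wordProd (L₁ ++ L₂') * sw p := by
        rw [show L₁ ++ (L₂' ++ [p]) = (L₁ ++ L₂') ++ [p] by simp, wordProd_append,
          wordProd_singleton]
      rw [← hprod', this, mul_assoc, sw, Equiv.swap_mul_self, mul_one]
    set g := wordProd L₂' with hg
    have hrange : ∀ x ∈ LM, 1 ≤ x ∧ x + 1 ≤ n := hLM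
    have hqr : 1 ≤ q ∧ q + 1 ≤ n := hLM q (by rw [hLMeq]; simp)
    have hL₂r : ∀ x ∈ L₂', 1 ≤ x ∧ x + 1 ≤ n := fun x hx => hLM x (by rw [hLMeq]; simp [hx])
    have hL₁r : ∀ x ∈ L₁, 1 ≤ x ∧ x + 1 ≤ n := fun x hx => hLM x (by rw [hLMeq]; simp [hx])
    have hgperm : PermOf n g := permOf_wordProd hL₂r
    have hfact : wordProd (L₁ ++ L₂') = (y * sw p) * Equiv.swap (g⁻¹ q) (g⁻¹ (q + 1)) := by
      rw [wordProd_delete L₁ L₂' q, ← hLMeq, hprodM, hg]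
    have hstep1 : StepRel n (y' * sw p) (y * sw p) := by
      refine ⟨g⁻¹ q, g⁻¹ (q + 1), ((permOf_inv hgperm).apply_mem hqr.1 (by omega)).1,
        ((permOf_inv hgperm).apply_mem hqr.1 (by omega)).2,
        ((permOf_inv hgperm).apply_mem (x := q + 1) (by omega) hqr.2).1,
        ((permOf_inv hgperm).apply_mem (x := q + 1) (by omega) hqr.2).2,
        fun h => by have := g⁻¹.injective h; omega, by rw [hys, hfact], ?_⟩
      have hlen1 : invNum n (y' * sw p) ≤ (L₁ ++ L₂').length := by
        rw [hys]
        exact invNum_wordProd_le n _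
      have hlen2 : (L₁ ++ L₂').length + 1 = LM.length := by
        rw [hLMeq]
        simp only [List.length_append, List.length_cons]
        omega
      omega
    have hstep2 : StepRel n (y * sw p) y :=
      ⟨p, p + 1, hp1, by omega, by omega, hp2, by omega, by rw [sw], hdesc⟩
    exact Relation.ReflTransGen.head hstep1 (Relation.ReflTransGen.single hstep2)

lemma lift' {n p : ℕ} (hp1 : 1 ≤ p) (hp2 : p + 1 ≤ n) :
    ∀ k (x y : Equiv.Perm ℕ), PermOf n y → invNum n y ≤ k → BLe n x y →
      BLe n (x * sw p) y ∨ BLe n (x * sw p) (y * sw p) := by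
  intro k
  induction k with
  | zero =>
    intro x y hy hk hch
    rcases hch.cases_tail with heq | ⟨y₁, hch₁, hstep⟩
    · rw [heq]
      exact Or.inr Relation.ReflTransGen.refl
    · have := hstep.invNum_lt
      omega
  | succ k ih =>
    intro x y hy hk hch
    rcases hch.cases_tail with heq | ⟨y₁, hch₁, hstep⟩
    · rw [heq]
      exact Or.inr Relation.ReflTransGen.refl
    · have hy₁ : PermOf n y₁ := hstep.permOf hy
      have hlt := hstep.invNum_lt
      rcases ih x y₁ hy₁ (by omega) hch₁ with hL | hR
      · exact Or.inl (hL.tail hstep)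
      · -- hR : BLe n (x * sw p) (y₁ * sw p)
        rcases Nat.lt_or_ge (invNum n (y * sw p)) (invNum n y) with hdesc | hasc
        · -- descent case: use dstep
          have hby : BLe n (y₁ * sw p) y := dstep hp1 hp2 hy hdesc hstep
          exact Or.inl (hR.trans hby)
        · -- ascent case
          have hne : y p ≠ y (p + 1) := fun h => by have := y.injective h; omega
          have hval : y p < y (p + 1) := by
            rcases Nat.lt_or_ge (y p) (y (p + 1)) with h | h
            · exact h
            · have : y (p + 1) < y p := by omega
              have := invNum_mul_sw_desc hy hp1 hp2 this
              omega
          have hexact : invNum n (y * sw p) = invNum n y + 1 :=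
            invNum_mul_sw_asc hy hp1 hp2 hval
          obtain ⟨a, b, ha1, han, hb1, hbn, hab, heq1, hlt1⟩ := hstep
          have hss : sw p * sw p = 1 := by rw [sw]; exact Equiv.swap_mul_self _ _
          have heq2 : y₁ * sw p = (y * sw p) * Equiv.swap (sw p a) (sw p b) := by
            have hconj : sw p * Equiv.swap a b * (sw p)⁻¹ = Equiv.swap (sw p a) (sw p b) := by
              rw [Equiv.mul_swap_eq_swap_mul, mul_inv_cancel_right]
            rw [← hconj, heq1]
            have hinv : (sw p)⁻¹ = sw p := by rw [sw, Equiv.swap_inv]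
            rw [hinv]
            simp only [← mul_assoc]
            rw [mul_assoc y (sw p) (sw p), hss, mul_one]
          have hperm₁ : PermOf n y₁ := hy₁
          have hstep2 : StepRel n (y₁ * sw p) (y * sw p) := by
            refine ⟨sw p a, sw p b,
              (sw_apply_mem hp1 hp2 ha1 han).1, (sw_apply_mem hp1 hp2 ha1 han).2,
              (sw_apply_mem hp1 hp2 hb1 hbn).1, (sw_apply_mem hp1 hp2 hb1 hbn).2,
              fun h => hab ((sw p).injective h), heq2, ?_⟩
            have h1 : invNum n (y₁ * sw p) ≤ invNum n y₁ + 1 := invNum_mul_sw_le hperm₁ hp1 hp2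
            omega
          exact Or.inr (hR.tail hstep2)

lemma main_sub {n : ℕ} :
    ∀ L : List ℕ, (∀ p ∈ L, 1 ≤ p ∧ p + 1 ≤ n) → L.length = invNum n (wordProd L) →
      ∀ L', L'.Sublist L → BLe n (wordProd L') (wordProd L) := by
  intro L
  induction L using List.reverseRecOn with
  | nil =>
    intro _ _ L' hL'
    rw [List.sublist_nil.1 hL']
    exact Relation.ReflTransGen.refl
  | append_singleton M p ihM =>
    intro hrange hlen L' hL'
    have hp : 1 ≤ p ∧ p + 1 ≤ n := hrange p (by simp)
    have hMrange : ∀ q ∈ M, 1 ≤ q ∧ q + 1 ≤ n := fun q hq => hrange q (by simp [hq])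
    have hvperm : PermOf n (wordProd M) := permOf_wordProd hMrange
    have hw : wordProd (M ++ [p]) = wordProd M * sw p := by
      rw [wordProd_append, wordProd_singleton]
    have hinvv : invNum n (wordProd M) ≤ M.length := invNum_wordProd_le n M
    have hinvw : invNum n (wordProd M * sw p) ≤ invNum n (wordProd M) + 1 :=
      invNum_mul_sw_le hvperm hp.1 hp.2
    have hlen' : M.length + 1 = invNum n (wordProd M * sw p) := by
      rw [← hw, ← hlen]
      simp
    have hMred : M.length = invNum n (wordProd M) := by omega
    have hvw : invNum n (wordProd M) < invNum n (wordProd M * sw p) := by omega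
    have hstepvw : StepRel n (wordProd M) (wordProd M * sw p) := by
      refine ⟨p, p + 1, hp.1, by omega, by omega, hp.2, by omega, ?_, hvw⟩
      rw [mul_assoc]
      rw [show (sw p : Equiv.Perm ℕ) * Equiv.swap p (p + 1) = 1 by
        rw [sw]; exact Equiv.swap_mul_self _ _]
      rw [mul_one]
    have hcases : L'.Sublist M ∨ ∃ M', L' = M' ++ [p] ∧ M'.Sublist M := by
      have h1 : L'.reverse.Sublist (p :: M.reverse) := by
        have := hL'.reverse
        simpa using this
      rcases List.sublist_cons_iff.1 h1 with h | ⟨r, hr, hrsub⟩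
      · left
        have := h.reverse
        simpa using this
      · right
        refine ⟨r.reverse, ?_, ?_⟩
        · have := congrArg List.reverse hr
          simpa using this
        · have := hrsub.reverse
          simpa using this
    rcases hcases with hsub | ⟨M', rfl, hsub⟩
    · have h1 : BLe n (wordProd L') (wordProd M) := ihM hMrange hMred L' hsub
      rw [hw]
      exact h1.tail hstepvw
    · have h0 : BLe n (wordProd M') (wordProd M) := ihM hMrange hMred M' hsub
      have hsplit : wordProd (M' ++ [p]) = wordProd M' * sw p := by
        rw [wordProd_append, wordProd_singleton]
      rcases lift' hp.1 hp.2 (invNum n (wordProd M)) (wordProd M') (wordProd M) hvperm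
          le_rfl h0 with h | h
      · rw [hw, hsplit]
        exact (h.tail hstepvw)
      · rw [hw, hsplit]
        exact h

lemma BruhatLE.toBLe {n : ℕ} {u w : Equiv.Perm ℕ} (h : BruhatLE n u w) : BLe n u w := by
  obtain ⟨L, ⟨⟨hrange, hprod⟩, hlen⟩, L', hsub, hprod'⟩ := h
  have hperm : PermOf n (wordProd L) := permOf_wordProd hrange
  have hred : L.length = invNum n (wordProd L) := by
    rw [hlen, ← hprod, len_eq_invNum hperm]
  rw [← hprod, ← hprod']
  exact main_sub L hrange hred L' hsub

end Aux


section PartA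

open Finset

variable {l n : ℕ}

lemma IsMP.sum_compSize {lam : ℕ → ℕ → ℕ} (h : IsMP l n lam) :
    ∑ m ∈ Finset.Icc 1 l, compSize n lam m = n := h.2.2

lemma IsMP.compSize_le {lam : ℕ → ℕ → ℕ} (h : IsMP l n lam) {m : ℕ}
    (hm1 : 1 ≤ m) (hml : m ≤ l) : compSize n lam m ≤ n := by
  calc compSize n lam m ≤ ∑ m' ∈ Finset.Icc 1 l, compSize n lam m' :=
        Finset.single_le_sum (fun _ _ => Nat.zero_le _) (Finset.mem_Icc.2 ⟨hm1, hml⟩)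
    _ = n := h.sum_compSize

lemma IsMP.part_le {lam : ℕ → ℕ → ℕ} (h : IsMP l n lam) {m r : ℕ}
    (hm1 : 1 ≤ m) (hml : m ≤ l) (hr1 : 1 ≤ r) (hrn : r ≤ n) : lam m r ≤ n := by
  calc lam m r ≤ ∑ r' ∈ Finset.Icc 1 n, lam m r' :=
        Finset.single_le_sum (fun _ _ => Nat.zero_le _) (Finset.mem_Icc.2 ⟨hr1, hrn⟩)
    _ = compSize n lam m := rfl
    _ ≤ n := h.compSize_le hm1 hml

lemma InDiag.ranges {lam : ℕ → ℕ → ℕ} (hP : IsMP l n lam) {A : Node} (hA : InDiag lam A) :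
    1 ≤ A.2.2 ∧ A.2.2 ≤ l ∧ 1 ≤ A.1 ∧ A.1 ≤ n ∧ 1 ≤ A.2.1 ∧ A.2.1 ≤ lam A.2.2 A.1 := by
  obtain ⟨hc1, hc2⟩ := hA
  have hkey : ¬ (A.2.2 = 0 ∨ l < A.2.2 ∨ A.1 = 0 ∨ n < A.1) := fun h => by
    have := hP.1 _ _ h
    omega
  push_neg at hkey
  exact ⟨by omega, by omega, by omega, by omega, hc1, hc2⟩

lemma IsMP.row_mono {lam : ℕ → ℕ → ℕ} (h : IsMP l n lam) (m : ℕ) :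
    ∀ r r', 1 ≤ r → r ≤ r' → lam m r' ≤ lam m r := by
  intro r r' h1 h2
  induction r', h2 using Nat.le_induction with
  | base => exact le_rfl
  | succ r' hr ih => exact le_trans (h.2.1 m r' (by omega)) ih

lemma colLen_ge {lam : ℕ → ℕ → ℕ} (h : IsMP l n lam) {A : Node} (hA : InDiag lam A) :
    A.1 ≤ colLen n lam A.2.2 A.2.1 := by
  obtain ⟨hm1, hml, hr1, hrn, hc1, hclam⟩ := InDiag.ranges h hA
  have hsub : Finset.Icc 1 A.1 ⊆ (Finset.Icc 1 n).filter (fun r' => A.2.1 ≤ lam A.2.2 r') := by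
    intro x hx
    rw [Finset.mem_Icc] at hx
    rw [Finset.mem_filter, Finset.mem_Icc]
    exact ⟨⟨hx.1, le_trans hx.2 hrn⟩, le_trans hclam (h.row_mono A.2.2 x A.1 hx.1 hx.2)⟩
  calc A.1 = (Finset.Icc 1 A.1).card := by rw [Nat.card_Icc]; omega
    _ ≤ _ := Finset.card_le_card hsub

lemma colLen_le {lam : ℕ → ℕ → ℕ} (m c : ℕ) : colLen n lam m c ≤ n := by
  calc colLen n lam m c ≤ (Finset.Icc 1 n).card := Finset.card_le_card (Finset.filter_subset _ _)
    _ = n := by rw [Nat.card_Icc]; omega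

lemma colsum_le_compSize {lam : ℕ → ℕ → ℕ} (m c : ℕ) :
    ∑ c' ∈ Finset.Icc 1 c, colLen n lam m c' ≤ compSize n lam m := by
  have hcl : ∀ c', colLen n lam m c' = ∑ r ∈ Finset.Icc 1 n, if c' ≤ lam m r then 1 else 0 :=
    fun c' => Finset.card_filter _ _
  calc ∑ c' ∈ Finset.Icc 1 c, colLen n lam m c'
      = ∑ c' ∈ Finset.Icc 1 c, ∑ r ∈ Finset.Icc 1 n, (if c' ≤ lam m r then 1 else 0) := by
        exact Finset.sum_congr rfl fun c' _ => hcl c'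
    _ = ∑ r ∈ Finset.Icc 1 n, ∑ c' ∈ Finset.Icc 1 c, (if c' ≤ lam m r then 1 else 0) :=
        Finset.sum_comm
    _ ≤ ∑ r ∈ Finset.Icc 1 n, lam m r := by
        apply Finset.sum_le_sum
        intro r _
        rw [← Finset.card_filter]
        calc ((Finset.Icc 1 c).filter fun c' => c' ≤ lam m r).card
            ≤ (Finset.Icc 1 (lam m r)).card := by
              apply Finset.card_le_card
              intro x hx
              rw [Finset.mem_filter, Finset.mem_Icc] at hx
              rw [Finset.mem_Icc]
              omega
          _ = lam m r := by rw [Nat.card_Icc]; omega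
    _ = compSize n lam m := rfl

lemma colsum_eq_compSize {lam : ℕ → ℕ → ℕ} (h : IsMP l n lam) {m : ℕ}
    (hm1 : 1 ≤ m) (hml : m ≤ l) :
    ∑ c' ∈ Finset.Icc 1 n, colLen n lam m c' = compSize n lam m := by
  have hcl : ∀ c', colLen n lam m c' = ∑ r ∈ Finset.Icc 1 n, if c' ≤ lam m r then 1 else 0 :=
    fun c' => Finset.card_filter _ _
  calc ∑ c' ∈ Finset.Icc 1 n, colLen n lam m c'
      = ∑ c' ∈ Finset.Icc 1 n, ∑ r ∈ Finset.Icc 1 n, (if c' ≤ lam m r then 1 else 0) :=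
        Finset.sum_congr rfl fun c' _ => hcl c'
    _ = ∑ r ∈ Finset.Icc 1 n, ∑ c' ∈ Finset.Icc 1 n, (if c' ≤ lam m r then 1 else 0) :=
        Finset.sum_comm
    _ = ∑ r ∈ Finset.Icc 1 n, lam m r := by
        apply Finset.sum_congr rfl
        intro r hr
        rw [Finset.mem_Icc] at hr
        rw [← Finset.card_filter]
        have hle : lam m r ≤ n := h.part_le hm1 hml hr.1 hr.2
        have : ((Finset.Icc 1 n).filter fun c' => c' ≤ lam m r) = Finset.Icc 1 (lam m r) := by
          apply Finset.ext
          intro x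
          rw [Finset.mem_filter, Finset.mem_Icc, Finset.mem_Icc]
          omega
        rw [this, Nat.card_Icc]
        omega
    _ = compSize n lam m := rfl

/-- `Nf lam c = |λ^(c)| + ⋯ + |λ^(l)|`. -/
def Nf (l n : ℕ) (lam : ℕ → ℕ → ℕ) (c : ℕ) : ℕ := ∑ m' ∈ Finset.Icc c l, compSize n lam m'

lemma Nf_anti {lam : ℕ → ℕ → ℕ} {c c' : ℕ} (h : c ≤ c') : Nf l n lam c' ≤ Nf l n lam c :=
  Finset.sum_le_sum_of_subset (Finset.Icc_subset_Icc_left h)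

lemma Nf_eq {lam : ℕ → ℕ → ℕ} {m : ℕ} (hml : m ≤ l) :
    Nf l n lam m = compSize n lam m + Nf l n lam (m + 1) := by
  rw [Nf, Nf, Finset.Icc_eq_cons_Ioc hml, Finset.sum_cons, ← Finset.Icc_add_one_left_eq_Ioc]

lemma Nf_one {lam : ℕ → ℕ → ℕ} (h : IsMP l n lam) : Nf l n lam 1 = n := h.sum_compSize

lemma Nf_top {lam : ℕ → ℕ → ℕ} : Nf l n lam (l + 1) = 0 := by
  rw [Nf, Finset.Icc_add_one_left_eq_Ioc, Finset.Ioc_self, Finset.sum_empty]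

lemma colTab_le_Nf {mu : ℕ → ℕ → ℕ} (h : IsMP l n mu) {A : Node} (hA : InDiag mu A) :
    colTab l n mu A ≤ Nf l n mu A.2.2 := by
  obtain ⟨hm1, hml, hr1, hrn, hc1, hclam⟩ := InDiag.ranges h hA
  have hcol : A.1 ≤ colLen n mu A.2.2 A.2.1 := colLen_ge h hA
  have hsum : (∑ c' ∈ Finset.Icc 1 (A.2.1 - 1), colLen n mu A.2.2 c') + A.1 ≤
      compSize n mu A.2.2 := by
    have hsplit : ∑ c' ∈ Finset.Icc 1 A.2.1, colLen n mu A.2.2 c' =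
        (∑ c' ∈ Finset.Icc 1 (A.2.1 - 1), colLen n mu A.2.2 c') + colLen n mu A.2.2 A.2.1 := by
      have he : A.2.1 = (A.2.1 - 1) + 1 := by omega
      rw [he, Finset.sum_Icc_succ_top (by omega), ← he]
    have := colsum_le_compSize (n := n) (lam := mu) A.2.2 A.2.1
    omega
  have hNf : Nf l n mu A.2.2 = compSize n mu A.2.2 + Nf l n mu (A.2.2 + 1) := Nf_eq hml
  show (∑ m' ∈ Finset.Icc (A.2.2 + 1) l, compSize n mu m') +
      (∑ c' ∈ Finset.Icc 1 (A.2.1 - 1), colLen n mu A.2.2 c') + A.1 ≤ Nf l n mu A.2.2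
  have : (∑ m' ∈ Finset.Icc (A.2.2 + 1) l, compSize n mu m') = Nf l n mu (A.2.2 + 1) := rfl
  omega

lemma Nf_lt_colTab {mu : ℕ → ℕ → ℕ} (h : IsMP l n mu) {A : Node} (hA : InDiag mu A) :
    Nf l n mu (A.2.2 + 1) < colTab l n mu A := by
  obtain ⟨hm1, hml, hr1, hrn, hc1, hclam⟩ := InDiag.ranges h hA
  show Nf l n mu (A.2.2 + 1) < (∑ m' ∈ Finset.Icc (A.2.2 + 1) l, compSize n mu m') +
      (∑ c' ∈ Finset.Icc 1 (A.2.1 - 1), colLen n mu A.2.2 c') + A.1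
  have : (∑ m' ∈ Finset.Icc (A.2.2 + 1) l, compSize n mu m') = Nf l n mu (A.2.2 + 1) := rfl
  omega

/-- The component of the entry `i` in `t_λ`. -/
noncomputable def gam (l n : ℕ) (lam : ℕ → ℕ → ℕ) (i : ℕ) : ℕ :=
  Nat.findGreatest (fun m => i ≤ Nf l n lam m) l

lemma gam_one_le {lam : ℕ → ℕ → ℕ} (h : IsMP l n lam) (hl : 1 ≤ l) {i : ℕ} (hin : i ≤ n) :
    1 ≤ gam l n lam i := by
  rw [gam]
  exact Nat.le_findGreatest hl (by rw [Nf_one h]; exact hin)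

lemma gam_le {lam : ℕ → ℕ → ℕ} (i : ℕ) : gam l n lam i ≤ l := by
  rw [gam]
  exact Nat.findGreatest_le l

lemma gam_spec {lam : ℕ → ℕ → ℕ} (h : IsMP l n lam) (hl : 1 ≤ l) {i : ℕ} (hin : i ≤ n) :
    i ≤ Nf l n lam (gam l n lam i) := by
  have := Nat.findGreatest_spec (P := fun m => i ≤ Nf l n lam m) (m := 1) (n := l) hl
    (by show i ≤ Nf l n lam 1; rw [Nf_one h]; exact hin)
  simpa [gam] using this

lemma gam_max {lam : ℕ → ℕ → ℕ} {i k : ℕ} (hk : gam l n lam i < k) (hkl : k ≤ l) :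
    ¬ i ≤ Nf l n lam k := by
  rw [gam] at hk
  exact Nat.findGreatest_is_greatest (P := fun m => i ≤ Nf l n lam m) hk hkl

lemma gam_anti {lam : ℕ → ℕ → ℕ} {i i' : ℕ} (h : i' ≤ i) :
    gam l n lam i ≤ gam l n lam i' := by
  rw [gam, gam]
  exact Nat.findGreatest_mono (fun m hm => le_trans h hm) le_rfl

lemma gam_eq_comp {lam : ℕ → ℕ → ℕ} (h : IsMP l n lam) (hl : 1 ≤ l) {i : ℕ} {B : Node}
    (hB : InDiag lam B) (hBi : colTab l n lam B = i) (hin : i ≤ n) :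
    gam l n lam i = B.2.2 := by
  obtain ⟨hm1, hml, hr1, hrn, hc1, hclam⟩ := InDiag.ranges h hB
  have hub : i ≤ Nf l n lam B.2.2 := by rw [← hBi]; exact colTab_le_Nf h hB
  have hlb : Nf l n lam (B.2.2 + 1) < i := by rw [← hBi]; exact Nf_lt_colTab h hB
  have h1 : B.2.2 ≤ gam l n lam i := by
    rw [gam]
    exact Nat.le_findGreatest hml hub
  have h2 : gam l n lam i ≤ B.2.2 := by
    by_contra hcon
    push_neg at hcon
    have hg := gam_spec h hl hin
    have : Nf l n lam (gam l n lam i) ≤ Nf l n lam (B.2.2 + 1) := Nf_anti (by omega)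
    omega
  omega

lemma colTab_surj {lam : ℕ → ℕ → ℕ} (hP : IsMP l n lam) (hl : 1 ≤ l) (i : ℕ)
    (hi1 : 1 ≤ i) (hin : i ≤ n) :
    ∃ B : Node, InDiag lam B ∧ colTab l n lam B = i := by
  set m := gam l n lam i with hm
  have hm1 : 1 ≤ m := gam_one_le hP hl hin
  have hml : m ≤ l := gam_le i
  have hup : i ≤ Nf l n lam m := gam_spec hP hl hin
  have hlow : Nf l n lam (m + 1) < i := by
    rcases eq_or_lt_of_le hml with heq | hlt
    · rw [heq, Nf_top]
      omega
    · by_contra hcon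
      push_neg at hcon
      exact gam_max (by omega) (by omega) hcon
  have hNfeq : Nf l n lam m = compSize n lam m + Nf l n lam (m + 1) := Nf_eq hml
  set o := i - Nf l n lam (m + 1) with ho
  have ho1 : 1 ≤ o := by omega
  have hoc : o ≤ compSize n lam m := by omega
  have hcs : ∑ c' ∈ Finset.Icc 1 n, colLen n lam m c' = compSize n lam m :=
    colsum_eq_compSize hP hm1 hml
  have hex : ∃ c, o ≤ ∑ c' ∈ Finset.Icc 1 c, colLen n lam m c' := ⟨n, by omega⟩
  obtain ⟨c, hcspec, hcmin⟩ : ∃ c, (o ≤ ∑ c' ∈ Finset.Icc 1 c, colLen n lam m c') ∧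
      ∀ c'' < c, ¬ o ≤ ∑ c' ∈ Finset.Icc 1 c'', colLen n lam m c' :=
    ⟨Nat.find hex, Nat.find_spec hex, fun c'' hlt => Nat.find_min hex hlt⟩
  have hc1 : 1 ≤ c := by
    by_contra hcon
    have hc0 : c = 0 := by omega
    rw [hc0] at hcspec
    simp at hcspec
    omega
  have hcprev : ¬ o ≤ ∑ c' ∈ Finset.Icc 1 (c - 1), colLen n lam m c' :=
    hcmin (c - 1) (by omega)
  set r := o - ∑ c' ∈ Finset.Icc 1 (c - 1), colLen n lam m c' with hr
  have hsplit : ∑ c' ∈ Finset.Icc 1 c, colLen n lam m c' =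
      (∑ c' ∈ Finset.Icc 1 (c - 1), colLen n lam m c') + colLen n lam m c := by
    have he : c = (c - 1) + 1 := by omega
    rw [he, Finset.sum_Icc_succ_top (by omega), ← he]
  have hr1 : 1 ≤ r := by omega
  have hrcl : r ≤ colLen n lam m c := by omega
  have hrn : r ≤ n := le_trans hrcl (colLen_le m c)
  have hclam2 : c ≤ lam m r := by
    by_contra hcon
    push_neg at hcon
    have hsub : (Finset.Icc 1 n).filter (fun r' => c ≤ lam m r') ⊆ Finset.Icc 1 (r - 1) := by
      intro x hx
      rw [Finset.mem_filter, Finset.mem_Icc] at hx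
      rw [Finset.mem_Icc]
      refine ⟨hx.1.1, ?_⟩
      by_contra hcon2
      push_neg at hcon2
      have : lam m x ≤ lam m r := hP.row_mono m r x hr1 (by omega)
      omega
    have : colLen n lam m c ≤ r - 1 := by
      calc colLen n lam m c ≤ (Finset.Icc 1 (r - 1)).card := Finset.card_le_card hsub
        _ = r - 1 := by rw [Nat.card_Icc]; omega
    omega
  have hInD : InDiag lam (r, c, m) := ⟨hc1, hclam2⟩
  refine ⟨(r, c, m), hInD, ?_⟩
  show (∑ m' ∈ Finset.Icc (m + 1) l, compSize n lam m') +
      (∑ c' ∈ Finset.Icc 1 (c - 1), colLen n lam m c') + r = i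
  have hNf' : (∑ m' ∈ Finset.Icc (m + 1) l, compSize n lam m') = Nf l n lam (m + 1) := rfl
  omega

end PartA

/-- If a standard `μ`-tableau `t` is weakly `λ`-column-dominated on
`1,…,j` and `u ⊴ t` (i.e. `w_u ≤ w_t` in the Bruhat order), then so is `u`. -/
theorem wColDom_of_bruhat_le (l n : ℕ) (hl : 1 ≤ l) (hn : 1 ≤ n)
    (lam mu : ℕ → ℕ → ℕ) (hlam : IsMP l n lam) (hmu : IsMP l n mu)
    (j : ℕ) (hj : j ≤ n)
    (t u : Node → ℕ) (ht : IsTab n mu t) (hu : IsTab n mu u)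
    (htstd : IsStd mu t) (hustd : IsStd mu u)
    (wt wu : Equiv.Perm ℕ)
    (hwt : IsPermOfTab n mu (colTab l n mu) t wt)
    (hwu : IsPermOfTab n mu (colTab l n mu) u wu)
    (hbru : BruhatLE n wu wt)
    (hdom : WColDomOn l n lam mu t j) :
    WColDomOn l n lam mu u j := by
  classical
  have hMmono : ∀ i i', 1 ≤ i' → i' ≤ i → i ≤ j →
      Nf l n mu (gam l n lam i') ≤ Nf l n mu (gam l n lam i) := by
    intro i i' _ hle _
    exact Nf_anti (gam_anti hle)
  have hPt : ∀ i, 1 ≤ i → i ≤ j → wt.symm i ≤ Nf l n mu (gam l n lam i) := by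
    intro i h1 h2
    have hin : i ≤ n := le_trans h2 hj
    obtain ⟨B, hB, hBi⟩ := colTab_surj hlam hl i h1 hin
    obtain ⟨At, hAt, hAti⟩ := ht.2.2 i h1 hin
    have hcomp : B.2.2 ≤ At.2.2 := hdom i At B h1 h2 hAt hAti hB hBi
    have hsymm : wt.symm i = colTab l n mu At := by
      rw [Equiv.symm_apply_eq, hwt.2 At hAt]
      exact hAti.symm
    rw [hsymm]
    calc colTab l n mu At ≤ Nf l n mu At.2.2 := colTab_le_Nf hmu hAt
      _ ≤ Nf l n mu B.2.2 := Nf_anti hcomp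
      _ = Nf l n mu (gam l n lam i) := by rw [gam_eq_comp hlam hl hB hBi hin]
  obtain ⟨hwuperm, hPu⟩ := BLe.preserve (BruhatLE.toBLe hbru) hwt.1
    (fun i => Nf l n mu (gam l n lam i)) hMmono hPt
  intro i A B h1 h2 hA hui hB hBi
  have hin : i ≤ n := le_trans h2 hj
  have hsymm : wu.symm i = colTab l n mu A := by
    rw [Equiv.symm_apply_eq, hwu.2 A hA]
    exact hui.symm
  have hle : colTab l n mu A ≤ Nf l n mu B.2.2 := by
    have h5 : wu.symm i ≤ Nf l n mu (gam l n lam i) := hPu i h1 h2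
    rw [hsymm, gam_eq_comp hlam hl hB hBi hin] at h5
    exact h5
  by_contra hcon
  push_neg at hcon
  have h3 : Nf l n mu B.2.2 ≤ Nf l n mu (A.2.2 + 1) := Nf_anti (by omega)
  have h4 := Nf_lt_colTab hmu hA
  omega


end FS
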